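/- There exists a surjective group homomorphism from the group ⟨y₁,…,y₈ | y₇y₂y₇⁻¹y₁⁻¹, y₈y₃y₈⁻¹y₂⁻¹, y₆y₄y₆⁻¹y₃⁻¹, y₁y₅y₁⁻¹y₄⁻¹, y₃y₆y₃⁻¹y₅⁻¹, y₄y₇y₄⁻¹y₆⁻¹, y₂y₈y₂⁻¹y₇⁻¹⟩ onto the group ⟨x₁,x₂,x₃ | x₃x₁x₃⁻¹x₂⁻¹, x₁x₂x₁⁻¹x₃⁻¹⟩, given by y₁ ↦ x₃, y₂ ↦ x₂, y₃ ↦ x₁, y₄ ↦ x₃, y₅ ↦ x₃, y₆ ↦ x₂, y₇ ↦ x₁, y₈ ↦ x₃. -/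

import Mathlib

/-- Wirtinger relators of the knot `8₅` (generators `y₁,…,y₈`). -/
def rels8_5 : Set (FreeGroup (Fin 8)) :=
  let y : Fin 8 → FreeGroup (Fin 8) := FreeGroup.of
  { y 6 * y 1 * (y 6)⁻¹ * (y 0)⁻¹,
    y 7 * y 2 * (y 7)⁻¹ * (y 1)⁻¹,
    y 5 * y 3 * (y 5)⁻¹ * (y 2)⁻¹,
    y 0 * y 4 * (y 0)⁻¹ * (y 3)⁻¹,
    y 2 * y 5 * (y 2)⁻¹ * (y 4)⁻¹,
    y 3 * y 6 * (y 3)⁻¹ * (y 5)⁻¹,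
    y 1 * y 7 * (y 1)⁻¹ * (y 6)⁻¹ }

/-- Wirtinger relators of the trefoil `3₁` (generators `x₁,x₂,x₃`). -/
def relsTrefoil : Set (FreeGroup (Fin 3)) :=
  let x : Fin 3 → FreeGroup (Fin 3) := FreeGroup.of
  { x 2 * x 0 * (x 2)⁻¹ * (x 1)⁻¹,
    x 0 * x 1 * (x 0)⁻¹ * (x 2)⁻¹ }

namespace Aux85

abbrev T := PresentedGroup relsTrefoil

noncomputable def x : Fin 3 → T := PresentedGroup.of

lemma rel_eq_one (r : FreeGroup (Fin 3)) (hr : r ∈ relsTrefoil) :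
    (QuotientGroup.mk r : T) = 1 := by
  rw [QuotientGroup.eq_one_iff]
  exact Subgroup.subset_normalClosure hr

lemma rel1 : x 2 * x 0 = x 1 * x 2 := by
  have h := rel_eq_one (FreeGroup.of 2 * FreeGroup.of 0 * (FreeGroup.of 2)⁻¹ *
      (FreeGroup.of 1)⁻¹) (by simp [relsTrefoil])
  have h' : x 2 * x 0 * (x 2)⁻¹ * (x 1)⁻¹ = 1 := by
    exact h
  rw [mul_inv_eq_one, mul_inv_eq_iff_eq_mul] at h'
  exact h' 

lemma rel2 : x 0 * x 1 = x 2 * x 0 := by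
  have h := rel_eq_one (FreeGroup.of 0 * FreeGroup.of 1 * (FreeGroup.of 0)⁻¹ *
      (FreeGroup.of 2)⁻¹) (by simp [relsTrefoil])
  have h' : x 0 * x 1 * (x 0)⁻¹ * (x 2)⁻¹ = 1 := by
    exact h
  rw [mul_inv_eq_one, mul_inv_eq_iff_eq_mul] at h'
  exact h' 

noncomputable def f : Fin 8 → T
  | 0 => x 2 | 1 => x 1 | 2 => x 0 | 3 => x 2
  | 4 => x 2 | 5 => x 1 | 6 => x 0 | 7 => x 2

lemma relsmap : ∀ r ∈ rels8_5, FreeGroup.lift f r = 1 := by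
  intro r hr
  have h1 := rel1
  have h2 := rel2
  have h3 : x 1 * x 2 = x 0 * x 1 := by rw [rel2, rel1]
  simp only [rels8_5, Set.mem_insert_iff, Set.mem_singleton_iff] at hr
  rcases hr with h|h|h|h|h|h|h <;> subst h <;>
    simp only [map_mul, map_inv, FreeGroup.lift_apply_of] <;>
    show f _ * f _ * (f _)⁻¹ * (f _)⁻¹ = 1 <;>
    simp only [f] <;>
    rw [mul_inv_eq_one, mul_inv_eq_iff_eq_mul] <;>
    first | exact h1 | exact h2 | exact h3 | rfl

end Aux85

/-- There is a surjective homomorphism `G(8₅) → G(3₁)` sending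
`y₁,…,y₈` to `x₃,x₂,x₁,x₃,x₃,x₂,x₁,x₃` respectively. -/
theorem surjection_8_5_trefoil :
    ∃ φ : PresentedGroup rels8_5 →* PresentedGroup relsTrefoil,
      Function.Surjective φ ∧
      (let y : Fin 8 → PresentedGroup rels8_5 := PresentedGroup.of
       let x : Fin 3 → PresentedGroup relsTrefoil := PresentedGroup.of
       φ (y 0) = x 2 ∧ φ (y 1) = x 1 ∧ φ (y 2) = x 0 ∧ φ (y 3) = x 2 ∧
       φ (y 4) = x 2 ∧ φ (y 5) = x 1 ∧ φ (y 6) = x 0 ∧ φ (y 7) = x 2) := by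
  refine ⟨PresentedGroup.toGroup Aux85.relsmap, ?_, ?_⟩
  · rw [← MonoidHom.range_eq_top, eq_top_iff, ← PresentedGroup.closure_range_of relsTrefoil,
      Subgroup.closure_le]
    rintro _ ⟨i, rfl⟩
    fin_cases i
    · exact ⟨PresentedGroup.of 2, PresentedGroup.toGroup.of _⟩
    · exact ⟨PresentedGroup.of 1, PresentedGroup.toGroup.of _⟩
    · exact ⟨PresentedGroup.of 0, PresentedGroup.toGroup.of _⟩
  · refine ⟨?_, ?_, ?_, ?_, ?_, ?_, ?_, ?_⟩ <;>
      exact PresentedGroup.toGroup.of Aux85.relsmap
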